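/- (Christoffel–Uvarov formula, nonsingular case) In the Uvarov setting, assume the matrix M_{n−1} := I_{Np} + ⟨𝒥^{[0,1]}_{K_{n−1}}(x),(β)_x⟩ is invertible. Then the perturbed polynomials and norms are given by the quasideterminantal formulas: P̂^{[1]}_n(x) = P^{[1]}_n(x) − ⟨P^{[1]}_n(x),(β)_x⟩ M_{n−1}⁻¹ 𝒥^{[0,1]}_{K_{n−1}}(x), (P̂^{[2]}_n(y))ᵀ = (P^{[2]}_n(y))ᵀ − ⟨K_{n−1}(x,y),(β)_x⟩ M_{n−1}⁻¹ (𝒥_{P^{[2]}_n})ᵀ, and Ĥ_n = H_n + ⟨P^{[1]}_n(x),(β)_x⟩ M_{n−1}⁻¹ (𝒥_{P^{[2]}_n})ᵀ. -/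

import Mathlib

open Polynomial Matrix Finset

namespace Paper

abbrev Mat (p : ℕ) := Matrix (Fin p) (Fin p) ℂ
abbrev MatPoly (p : ℕ) := Matrix (Fin p) (Fin p) (Polynomial ℂ)

variable {p : ℕ}

/-- Embed a constant matrix as a matrix polynomial. -/
noncomputable def cm (A : Mat p) : MatPoly p := A.map Polynomial.C

/-- The monomial `I_p x^k` as a matrix polynomial. -/
noncomputable def monoM (p k : ℕ) : MatPoly p := Matrix.diagonal (fun _ => (Polynomial.X : Polynomial ℂ) ^ k)

/-- The `k`-th matrix coefficient of a matrix polynomial. -/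
noncomputable def coeffM (P : MatPoly p) (k : ℕ) : Mat p := Matrix.of fun i j => (P i j).coeff k

/-- Entrywise derivative of a matrix polynomial. -/
noncomputable def dM : MatPoly p → MatPoly p := fun P => Matrix.of fun i j => Polynomial.derivative (P i j)

/-- Evaluation of a matrix polynomial at a scalar point. -/
noncomputable def evM (z : ℂ) (P : MatPoly p) : Mat p := Matrix.of fun i j => (P i j).eval z

/-- `P` is monic of exact degree `n`. -/
def MonicDeg (P : MatPoly p) (n : ℕ) : Prop :=
  coeffM P n = 1 ∧ ∀ k, n < k → coeffM P k = 0

/-- Sesquilinear form on matrix polynomials: left `ℂ^{p×p}`-linear in the first slot,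
`⟨P, AQ + R⟩ = ⟨P,Q⟩Aᵀ + ⟨P,R⟩` in the second slot. -/
def IsSesq (S : MatPoly p → MatPoly p → Mat p) : Prop :=
  (∀ (A : Mat p) (P Q R : MatPoly p), S (cm A * P + Q) R = A * S P R + S Q R) ∧
  (∀ (A : Mat p) (P Q R : MatPoly p), S P (cm A * Q + R) = S P Q * Aᵀ + S P R)

end Paper

namespace Paper

variable {p : ℕ}

/-- Jet index set: pairs (point j, derivative order m < κ j). -/
abbrev JIdx (q : ℕ) (κ : Fin q → ℕ) := Σ j : Fin q, Fin (κ j)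

/-- The `a`-th `p×p` block (a jet index) of the column jet `𝒥^{[0,1]}_{K_{n-1}}(x)`:
the `y`-jet of the Christoffel–Darboux kernel `K_{n-1}(x,y)` at the point `xpt a.1`,
derivative order `a.2`, divided by `(a.2)!`; a matrix polynomial in `x`. -/
noncomputable def KBlock {q : ℕ} {κ : Fin q → ℕ} (P1 P2 : ℕ → MatPoly p) (H : ℕ → Mat p)
    (xpt : Fin q → ℂ) (n : ℕ) (a : JIdx q κ) : MatPoly p :=
  ∑ k ∈ Finset.range n,
    cm ((((Nat.factorial (a.2 : ℕ) : ℂ))⁻¹ • evM (xpt a.1) (dM^[(a.2 : ℕ)] (P2 k)))ᵀ * (H k)⁻¹)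
      * P1 k

/-- The `Np×Np` matrix of pairings `⟨𝒥^{[0,1]}_{K_{n-1}}(x), (β)_x⟩`. -/
noncomputable def PairM {q : ℕ} {κ : Fin q → ℕ} (β : JIdx q κ → MatPoly p → Mat p)
    (P1 P2 : ℕ → MatPoly p) (H : ℕ → Mat p) (xpt : Fin q → ℂ) (n : ℕ) :
    Matrix (JIdx q κ × Fin p) (JIdx q κ × Fin p) ℂ :=
  Matrix.of fun a b => (β b.1 (KBlock P1 P2 H xpt n a.1)) a.2 b.2

/-- The `p×Np` row of pairings `⟨P(x), (β)_x⟩`. -/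
noncomputable def RowB {q : ℕ} {κ : Fin q → ℕ} (β : JIdx q κ → MatPoly p → Mat p)
    (P : MatPoly p) : Matrix (Fin p) (JIdx q κ × Fin p) ℂ :=
  Matrix.of fun s b => (β b.1 P) s b.2

/-- The `p×Np` spectral jet `𝒥_f` of a matrix polynomial at the points `xpt j`,
with multiplicities `κ j`. -/
noncomputable def JetRow {q : ℕ} (κ : Fin q → ℕ) (xpt : Fin q → ℂ) (f : MatPoly p) :
    Matrix (Fin p) (JIdx q κ × Fin p) ℂ :=
  Matrix.of fun s a =>
    ((Nat.factorial (a.1.2 : ℕ) : ℂ)⁻¹ • evM (xpt a.1.1) (dM^[(a.1.2 : ℕ)] f)) s a.2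

/-- The `Np×p` jet `𝒥^{[0,1]}_{K_{n-1}}(x)` as a matrix with polynomial entries. -/
noncomputable def Jet01 {q : ℕ} (κ : Fin q → ℕ) (P1 P2 : ℕ → MatPoly p) (H : ℕ → Mat p)
    (xpt : Fin q → ℂ) (n : ℕ) : Matrix (JIdx q κ × Fin p) (Fin p) (Polynomial ℂ) :=
  Matrix.of fun a t => (KBlock (κ := κ) P1 P2 H xpt n a.1) a.2 t

end Paper

namespace Paper

/-- The row `⟨K_{n−1}(x,y),(β)_x⟩ ∈ ℂ^{p×Np}`, a matrix with entries polynomial in `y`. -/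
noncomputable def RowK {p q : ℕ} {κ : Fin q → ℕ} (β : JIdx q κ → MatPoly p → Mat p)
    (P1 P2 : ℕ → MatPoly p) (H : ℕ → Mat p) (n : ℕ) :
    Matrix (Fin p) (JIdx q κ × Fin p) (Polynomial ℂ) :=
  Matrix.of fun s b =>
    (∑ k ∈ Finset.range n, (P2 k)ᵀ * cm ((H k)⁻¹ * β b.1 (P1 k))) s b.2

end Paper


namespace Paper

open Polynomial

variable {p : ℕ}

/-! ### `cm` lemmas -/

lemma cm_zero : cm (0 : Mat p) = 0 := by ext i j; simp [cm]

lemma cm_one : cm (1 : Mat p) = 1 := Matrix.map_one _ (map_zero _) (map_one _)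

lemma cm_add (A B : Mat p) : cm (A + B) = cm A + cm B := by ext i j; simp [cm]

lemma cm_neg (A : Mat p) : cm (-A) = -(cm A) := by ext i j; simp [cm]

lemma cm_mul (A B : Mat p) : cm (A * B) = cm A * cm B := by
  ext i j; simp [cm, Matrix.mul_apply, map_sum]

lemma cm_transpose (A : Mat p) : (cm A)ᵀ = cm (Aᵀ) := rfl

lemma cm_sum {ι : Type*} (s : Finset ι) (f : ι → Mat p) :
    cm (∑ i ∈ s, f i) = ∑ i ∈ s, cm (f i) := by
  ext i j; simp [cm, Matrix.map_apply, Matrix.sum_apply, map_sum]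

/-! ### sesquilinear form lemmas -/

section SesqLemmas

variable {S : MatPoly p → MatPoly p → Mat p} (hS : IsSesq S)
include hS

lemma sesq_addl (P Q R : MatPoly p) : S (P + Q) R = S P R + S Q R := by
  have h := hS.1 1 P Q R
  rwa [cm_one, one_mul, Matrix.one_mul] at h

lemma sesq_zerol (R : MatPoly p) : S 0 R = 0 := by
  have h := sesq_addl hS 0 0 R
  simp only [add_zero] at h
  exact right_eq_add.mp h

lemma sesq_cml (A : Mat p) (P R : MatPoly p) : S (cm A * P) R = A * S P R := by
  have h := hS.1 A P 0 R
  rwa [add_zero, sesq_zerol hS, add_zero] at h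

lemma sesq_suml {ι : Type*} (s : Finset ι) (A : ι → Mat p) (P : ι → MatPoly p)
    (R : MatPoly p) :
    S (∑ i ∈ s, cm (A i) * P i) R = ∑ i ∈ s, A i * S (P i) R := by
  classical
  induction s using Finset.cons_induction with
  | empty => simpa using sesq_zerol hS R
  | cons a s ha ih =>
      rw [Finset.sum_cons, Finset.sum_cons, sesq_addl hS, sesq_cml hS, ih]

lemma sesq_addr (P Q R : MatPoly p) : S P (Q + R) = S P Q + S P R := by
  have h := hS.2 1 P Q R
  rwa [cm_one, one_mul, Matrix.transpose_one, Matrix.mul_one] at h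

lemma sesq_zeror (P : MatPoly p) : S P 0 = 0 := by
  have h := sesq_addr hS P 0 0
  simp only [add_zero] at h
  exact right_eq_add.mp h

lemma sesq_cmr (A : Mat p) (P Q : MatPoly p) : S P (cm A * Q) = S P Q * Aᵀ := by
  have h := hS.2 A P Q 0
  rwa [add_zero, sesq_zeror hS, add_zero] at h

lemma sesq_sumr {ι : Type*} (s : Finset ι) (A : ι → Mat p) (Q : ι → MatPoly p)
    (P : MatPoly p) :
    S P (∑ i ∈ s, cm (A i) * Q i) = ∑ i ∈ s, S P (Q i) * (A i)ᵀ := by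
  classical
  induction s using Finset.cons_induction with
  | empty => simpa using sesq_zeror hS P
  | cons a s ha ih =>
      rw [Finset.sum_cons, Finset.sum_cons, sesq_addr hS, sesq_cmr hS, ih]

end SesqLemmas

/-! ### β lemmas -/

section BetaLemmas

variable {q : ℕ} {κ : Fin q → ℕ} {β : JIdx q κ → MatPoly p → Mat p}
  (hβ : ∀ a (A : Mat p) (P Q : MatPoly p), β a (cm A * P + Q) = A * β a P + β a Q)
include hβ

lemma beta_add (a : JIdx q κ) (P Q : MatPoly p) : β a (P + Q) = β a P + β a Q := by
  have h := hβ a 1 P Q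
  rwa [cm_one, one_mul, Matrix.one_mul] at h

lemma beta_zero (a : JIdx q κ) : β a 0 = 0 := by
  have h := beta_add hβ a 0 0
  simp only [add_zero] at h
  exact right_eq_add.mp h

lemma beta_cm (a : JIdx q κ) (A : Mat p) (P : MatPoly p) :
    β a (cm A * P) = A * β a P := by
  have h := hβ a A P 0
  rwa [add_zero, beta_zero hβ, add_zero] at h

lemma beta_neg (a : JIdx q κ) (P : MatPoly p) : β a (-P) = -β a P := by
  have h := beta_cm hβ a (-1) P
  rwa [cm_neg, cm_one, neg_one_mul, neg_one_mul] at h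

lemma beta_sub (a : JIdx q κ) (P Q : MatPoly p) : β a (P - Q) = β a P - β a Q := by
  rw [sub_eq_add_neg, beta_add hβ, beta_neg hβ, sub_eq_add_neg]

lemma beta_sum {ι : Type*} (a : JIdx q κ) (s : Finset ι) (f : ι → MatPoly p) :
    β a (∑ i ∈ s, f i) = ∑ i ∈ s, β a (f i) := by
  classical
  induction s using Finset.cons_induction with
  | empty => simpa using beta_zero hβ a
  | cons b s hb ih => rw [Finset.sum_cons, Finset.sum_cons, beta_add hβ, ih]

end BetaLemmas

/-! ### coeffM and the expansion lemma -/

lemma coeffM_sub (P Q : MatPoly p) (k : ℕ) :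
    coeffM (P - Q) k = coeffM P k - coeffM Q k := by
  ext i j; simp [coeffM]

lemma coeffM_cm_mul (A : Mat p) (P : MatPoly p) (k : ℕ) :
    coeffM (cm A * P) k = A * coeffM P k := by
  ext i j
  simp [coeffM, cm, Matrix.mul_apply, Polynomial.finset_sum_coeff, Polynomial.coeff_C_mul]

lemma eq_zero_of_coeffM {P : MatPoly p} (h : ∀ k, coeffM P k = 0) : P = 0 := by
  refine Matrix.ext fun i j => ?_
  show P i j = 0
  refine Polynomial.ext fun k => ?_
  have := congrFun (congrFun (h k) i) j
  simpa [coeffM] using this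

lemma expand (P : ℕ → MatPoly p) (hm : ∀ k, MonicDeg (P k) k) :
    ∀ (n : ℕ) (R : MatPoly p), (∀ k, n ≤ k → coeffM R k = 0) →
      ∃ C : ℕ → Mat p, R = ∑ k ∈ Finset.range n, cm (C k) * P k := by
  intro n
  induction n with
  | zero =>
      intro R hR
      exact ⟨0, by simpa using eq_zero_of_coeffM fun k => hR k (Nat.zero_le k)⟩
  | succ n ih =>
      intro R hR
      have hcond : ∀ k, n ≤ k → coeffM (R - cm (coeffM R n) * P n) k = 0 := by
        intro k hk
        rcases eq_or_lt_of_le hk with h | h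
        · rw [coeffM_sub, coeffM_cm_mul, ← h, (hm n).1, mul_one, sub_self]
        · rw [coeffM_sub, coeffM_cm_mul, hR k h, (hm n).2 k h, mul_zero, sub_self]
      obtain ⟨C, hC⟩ := ih (R - cm (coeffM R n) * P n) hcond
      refine ⟨Function.update C n (coeffM R n), ?_⟩
      rw [Finset.sum_range_succ]
      have hsum : ∑ k ∈ Finset.range n, cm (Function.update C n (coeffM R n) k) * P k
          = ∑ k ∈ Finset.range n, cm (C k) * P k :=
        Finset.sum_congr rfl fun k hk => by
          rw [Function.update_of_ne (Finset.mem_range.mp hk).ne]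
      rw [hsum, Function.update_self, ← hC, sub_add_cancel]

/-! ### evM / dM / jet lemmas -/

lemma dM_iter_apply (m : ℕ) (P : MatPoly p) (i j : Fin p) :
    (dM^[m] P) i j = Polynomial.derivative^[m] (P i j) := by
  induction m generalizing P with
  | zero => rfl
  | succ m ih =>
      rw [Function.iterate_succ_apply, Function.iterate_succ_apply, ih (dM P)]
      rfl

lemma dM_iter_transpose (m : ℕ) (P : MatPoly p) : dM^[m] (Pᵀ) = (dM^[m] P)ᵀ := by
  ext i j
  rw [dM_iter_apply, Matrix.transpose_apply, Matrix.transpose_apply, dM_iter_apply]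

lemma evM_transpose (z : ℂ) (P : MatPoly p) : evM z (Pᵀ) = (evM z P)ᵀ := rfl

/-- scalar jet functional -/
noncomputable def jet (m : ℕ) (z : ℂ) (f : Polynomial ℂ) : ℂ :=
  ((m.factorial : ℂ))⁻¹ * (Polynomial.derivative^[m] f).eval z

lemma iter_derivative_add (m : ℕ) (f g : Polynomial ℂ) :
    Polynomial.derivative^[m] (f + g)
      = Polynomial.derivative^[m] f + Polynomial.derivative^[m] g := by
  induction m generalizing f g with
  | zero => rfl
  | succ m ih =>
      simp only [Function.iterate_succ_apply, map_add]
      exact ih _ _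

lemma jet_add (m : ℕ) (z : ℂ) (f g : Polynomial ℂ) :
    jet m z (f + g) = jet m z f + jet m z g := by
  simp [jet, iter_derivative_add, mul_add]

lemma jet_zero (m : ℕ) (z : ℂ) : jet m z 0 = 0 := by
  simp [jet, Polynomial.iterate_derivative_zero]

lemma jet_neg (m : ℕ) (z : ℂ) (f : Polynomial ℂ) : jet m z (-f) = -jet m z f := by
  have h := jet_add m z f (-f)
  simp only [add_neg_cancel, jet_zero] at h
  linear_combination -h

lemma jet_sub (m : ℕ) (z : ℂ) (f g : Polynomial ℂ) :
    jet m z (f - g) = jet m z f - jet m z g := by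
  rw [sub_eq_add_neg, jet_add, jet_neg, sub_eq_add_neg]

lemma jet_sum {ι : Type*} (m : ℕ) (z : ℂ) (s : Finset ι) (f : ι → Polynomial ℂ) :
    jet m z (∑ i ∈ s, f i) = ∑ i ∈ s, jet m z (f i) := by
  classical
  induction s using Finset.cons_induction with
  | empty => simp [jet_zero]
  | cons a s ha ih => rw [Finset.sum_cons, Finset.sum_cons, jet_add, ih]

lemma jet_mul_C (m : ℕ) (z : ℂ) (f : Polynomial ℂ) (c : ℂ) :
    jet m z (f * Polynomial.C c) = jet m z f * c := by
  rw [jet, jet, mul_comm f (Polynomial.C c), Polynomial.iterate_derivative_C_mul]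
  simp only [Polynomial.eval_mul, Polynomial.eval_C]
  ring

lemma jetRow_apply {q : ℕ} (κ : Fin q → ℕ) (xpt : Fin q → ℂ) (f : MatPoly p)
    (s : Fin p) (a : JIdx q κ × Fin p) :
    JetRow κ xpt f s a = jet (a.1.2 : ℕ) (xpt a.1.1) (f s a.2) := by
  simp [JetRow, jet, evM, dM_iter_apply, Matrix.smul_apply, smul_eq_mul]


end Paper

open Paper in
/-- Christoffel–Uvarov formulas, nonsingular case: if
`M_{n−1} := I_{Np} + ⟨𝒥^{[0,1]}_{K_{n−1}}(x),(β)_x⟩` is invertible, then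
`P̂^{[1]}_n = P^{[1]}_n − ⟨P^{[1]}_n,(β)⟩ M_{n−1}⁻¹ 𝒥^{[0,1]}_{K_{n−1}}`,
`(P̂^{[2]}_n)ᵀ = (P^{[2]}_n)ᵀ − ⟨K_{n−1}(x,y),(β)_x⟩ M_{n−1}⁻¹ (𝒥_{P^{[2]}_n})ᵀ`, and
`Ĥ_n = H_n + ⟨P^{[1]}_n,(β)⟩ M_{n−1}⁻¹ (𝒥_{P^{[2]}_n})ᵀ`. -/
theorem statement11 (p q : ℕ) (κ : Fin q → ℕ) (hκ : ∀ j, 0 < κ j) (xpt : Fin q → ℂ)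
    (hx : Function.Injective xpt)
    (u uh : MatPoly p → MatPoly p → Mat p) (hu : IsSesq u) (huh : IsSesq uh)
    (β : JIdx q κ → MatPoly p → Mat p)
    (hβ : ∀ a (A : Mat p) (P Q : MatPoly p), β a (cm A * P + Q) = A * β a P + β a Q)
    (hv : ∀ P Q : MatPoly p, uh P Q = u P Q + ∑ a : JIdx q κ,
        (Nat.factorial (a.2 : ℕ) : ℂ)⁻¹ • (β a P * evM (xpt a.1) (dM^[(a.2 : ℕ)] Qᵀ)))
    (P1 P2 hP1 hP2 : ℕ → MatPoly p) (H Hh : ℕ → Mat p)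
    (hmon1 : ∀ k, MonicDeg (P1 k) k) (hmon2 : ∀ k, MonicDeg (P2 k) k)
    (hmon1h : ∀ k, MonicDeg (hP1 k) k) (hmon2h : ∀ k, MonicDeg (hP2 k) k)
    (hH : ∀ k, IsUnit (H k)) (hHh : ∀ k, IsUnit (Hh k))
    (hbio : ∀ k l, u (P1 k) (P2 l) = if k = l then H k else 0)
    (hbioh : ∀ k l, uh (hP1 k) (hP2 l) = if k = l then Hh k else 0)
    (n : ℕ)
    (hM : IsUnit (1 + PairM β P1 P2 H xpt n)) :
    hP1 n = P1 n
      - (RowB β (P1 n)).map Polynomial.C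
          * ((1 + PairM β P1 P2 H xpt n)⁻¹).map Polynomial.C
          * Jet01 κ P1 P2 H xpt n ∧
    (hP2 n)ᵀ = (P2 n)ᵀ
      - RowK β P1 P2 H n
          * ((1 + PairM β P1 P2 H xpt n)⁻¹).map Polynomial.C
          * ((JetRow κ xpt (P2 n))ᵀ).map Polynomial.C ∧
    Hh n = H n
      + RowB β (P1 n) * (1 + PairM β P1 P2 H xpt n)⁻¹ * (JetRow κ xpt (P2 n))ᵀ := by
  classical
  set M : Matrix (JIdx q κ × Fin p) (JIdx q κ × Fin p) ℂ := 1 + PairM β P1 P2 H xpt n with hMdef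
  have hMdet : IsUnit M.det := (Matrix.isUnit_iff_isUnit_det M).mp hM
  have hMM : M * M⁻¹ = 1 := Matrix.mul_nonsing_inv M hMdet
  have hMM' : M⁻¹ * M = 1 := Matrix.nonsing_inv_mul M hMdet
  have hHinv : ∀ k, H k * (H k)⁻¹ = 1 := fun k =>
    Matrix.mul_nonsing_inv _ ((Matrix.isUnit_iff_isUnit_det _).mp (hH k))
  have hHinv' : ∀ k, (H k)⁻¹ * H k = 1 := fun k =>
    Matrix.nonsing_inv_mul _ ((Matrix.isUnit_iff_isUnit_det _).mp (hH k))
  -- Step 1: expansion of hP1 n over the P1 basis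
  have h1 : ∀ k, n ≤ k → coeffM (hP1 n - P1 n) k = 0 := by
    intro k hk
    rcases eq_or_lt_of_le hk with h | h
    · rw [coeffM_sub, ← h, (hmon1h n).1, (hmon1 n).1, sub_self]
    · rw [coeffM_sub, (hmon1h n).2 k h, (hmon1 n).2 k h, sub_self]
  obtain ⟨C, hC⟩ := expand P1 hmon1 n _ h1
  have hC' : hP1 n = P1 n + ∑ l ∈ Finset.range n, cm (C l) * P1 l := by
    rw [← hC]; abel
  -- Step 2: uh (hP1 n) (P2 l) = 0 for l < n
  have step2 : ∀ l, l < n → uh (hP1 n) (P2 l) = 0 := by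
    intro l hl
    obtain ⟨B, hB⟩ := expand hP2 hmon2h (l + 1) (P2 l) (fun k hk => (hmon2 l).2 k hk)
    rw [hB, sesq_sumr huh]
    refine Finset.sum_eq_zero fun k hk => ?_
    have hkn : ¬ (n = k) := by have := Finset.mem_range.mp hk; omega
    rw [hbioh n k, if_neg hkn, Matrix.zero_mul]
  -- Step 3 : the coefficients C l
  have step3 : ∀ l, l < n → C l
      = -(∑ a : JIdx q κ, (Nat.factorial (a.2 : ℕ) : ℂ)⁻¹ •
          (β a (hP1 n) * evM (xpt a.1) (dM^[(a.2 : ℕ)] (P2 l)ᵀ))) * (H l)⁻¹ := by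
    intro l hl
    have hul : u (hP1 n) (P2 l) = C l * H l := by
      rw [hC', sesq_addl hu, sesq_suml hu, hbio n l, if_neg (by omega : ¬ (n = l))]
      have hterms : ∀ k ∈ Finset.range n, C k * u (P1 k) (P2 l)
          = if k = l then C l * H l else 0 := by
        intro k _
        by_cases h : k = l
        · subst h; simp [hbio k k]
        · rw [hbio k l, if_neg h, if_neg h, mul_zero]
      rw [Finset.sum_congr rfl hterms, Finset.sum_ite_eq' (Finset.range n) l,
        if_pos (Finset.mem_range.mpr hl), zero_add]
    have h0 := step2 l hl
    rw [hv (hP1 n) (P2 l), hul] at h0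
    have hneg : C l * H l
        = -(∑ a : JIdx q κ, (Nat.factorial (a.2 : ℕ) : ℂ)⁻¹ •
            (β a (hP1 n) * evM (xpt a.1) (dM^[(a.2 : ℕ)] (P2 l)ᵀ))) :=
      eq_neg_of_add_eq_zero_left h0
    calc C l = C l * H l * (H l)⁻¹ := by rw [mul_assoc, hHinv l, mul_one]
    _ = _ := by rw [hneg]
  -- rewrite of the jet terms
  have hWt : ∀ (a : JIdx q κ) (l : ℕ),
      (Nat.factorial (a.2 : ℕ) : ℂ)⁻¹ • (β a (hP1 n) * evM (xpt a.1) (dM^[(a.2 : ℕ)] (P2 l)ᵀ))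
        = β a (hP1 n) *
          ((Nat.factorial (a.2 : ℕ) : ℂ)⁻¹ • evM (xpt a.1) (dM^[(a.2 : ℕ)] (P2 l)))ᵀ := by
    intro a l
    rw [dM_iter_transpose, evM_transpose, Matrix.transpose_smul, mul_smul_comm]
  -- Step 4: quasideterminantal identity for hP1
  have hkey1 : hP1 n
      = P1 n - ∑ a : JIdx q κ, cm (β a (hP1 n)) * KBlock P1 P2 H xpt n a := by
    conv_lhs => rw [hC']
    rw [sub_eq_add_neg]
    congr 1
    have hexp : ∑ a : JIdx q κ, cm (β a (hP1 n)) * KBlock P1 P2 H xpt n a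
        = ∑ l ∈ Finset.range n,
            cm ((∑ a : JIdx q κ, β a (hP1 n) *
                ((Nat.factorial (a.2 : ℕ) : ℂ)⁻¹ •
                  evM (xpt a.1) (dM^[(a.2 : ℕ)] (P2 l)))ᵀ) * (H l)⁻¹) * P1 l := by
      unfold KBlock
      simp only [Finset.mul_sum]
      rw [Finset.sum_comm]
      refine Finset.sum_congr rfl fun l _ => ?_
      simp only [Finset.sum_mul, cm_sum, cm_mul, mul_assoc]
    rw [hexp, ← Finset.sum_neg_distrib]
    refine Finset.sum_congr rfl fun l hl => ?_
    have hCl := step3 l (Finset.mem_range.mp hl)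
    rw [Finset.sum_congr rfl (fun a _ => hWt a l)] at hCl
    rw [hCl, neg_mul, cm_neg, neg_mul, Finset.sum_mul]
  -- Step 5: the row of β-values of hP1 n
  have hbkey : ∀ b : JIdx q κ, β b (hP1 n)
      + ∑ a : JIdx q κ, β a (hP1 n) * β b (KBlock P1 P2 H xpt n a) = β b (P1 n) := by
    intro b
    have h := congrArg (β b) hkey1
    rw [beta_sub hβ, beta_sum hβ] at h
    simp only [beta_cm hβ] at h
    rw [h, sub_add_cancel]
  have hG5 : RowB β (hP1 n) * M = RowB β (P1 n) := by
    ext s bj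
    obtain ⟨b, j⟩ := bj
    have h := congrFun (congrFun (hbkey b) s) j
    simp only [Matrix.add_apply, Matrix.sum_apply, Matrix.mul_apply] at h
    rw [hMdef]
    simp only [Matrix.mul_apply, Matrix.add_apply, Matrix.one_apply, RowB, PairM,
      Matrix.of_apply, mul_add, Finset.sum_add_distrib, mul_ite, mul_one, mul_zero,
      Finset.sum_ite_eq', Finset.mem_univ, if_true]
    rw [Fintype.sum_prod_type]
    exact h
  have hGinv : RowB β (hP1 n) = RowB β (P1 n) * M⁻¹ := by
    rw [← hG5, Matrix.mul_assoc, hMM, Matrix.mul_one]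
  have goal1 : hP1 n = P1 n - (RowB β (P1 n)).map Polynomial.C
      * ((M⁻¹).map Polynomial.C) * Jet01 κ P1 P2 H xpt n := by
    conv_rhs => rw [← Matrix.map_mul, ← hGinv]
    conv_lhs => rw [hkey1]
    congr 1
    refine Matrix.ext fun s t => ?_
    simp only [Matrix.mul_apply, Matrix.sum_apply, Matrix.map_apply, RowB, Jet01,
      Matrix.of_apply, cm]
    rw [Fintype.sum_prod_type]
  -- Part 3 : the norm formula
  have h3 : ∀ k, n ≤ k → coeffM (P2 n - hP2 n) k = 0 := by
    intro k hk
    rcases eq_or_lt_of_le hk with h | h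
    · rw [coeffM_sub, ← h, (hmon2 n).1, (hmon2h n).1, sub_self]
    · rw [coeffM_sub, (hmon2 n).2 k h, (hmon2h n).2 k h, sub_self]
  obtain ⟨E, hE⟩ := expand hP2 hmon2h n _ h3
  have hE' : P2 n = hP2 n + ∑ l ∈ Finset.range n, cm (E l) * hP2 l := by
    rw [← hE]; abel
  have h3a : uh (hP1 n) (P2 n) = Hh n := by
    conv_lhs => rw [hE']
    rw [sesq_addr huh, sesq_sumr huh, hbioh n n, if_pos rfl]
    have hz : ∑ l ∈ Finset.range n, uh (hP1 n) (hP2 l) * (E l)ᵀ = 0 :=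
      Finset.sum_eq_zero fun l hl => by
        rw [hbioh n l, if_neg (by have := Finset.mem_range.mp hl; omega : ¬ (n = l)),
          Matrix.zero_mul]
    rw [hz, add_zero]
  have h3b : u (hP1 n) (P2 n) = H n := by
    conv_lhs => rw [hC']
    rw [sesq_addl hu, sesq_suml hu, hbio n n, if_pos rfl]
    have hz : ∑ k ∈ Finset.range n, C k * u (P1 k) (P2 n) = 0 :=
      Finset.sum_eq_zero fun k hk => by
        rw [hbio k n, if_neg (by have := Finset.mem_range.mp hk; omega : ¬ (k = n)), mul_zero]
    rw [hz, add_zero]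
  have h3c : Hh n = H n + ∑ a : JIdx q κ, (Nat.factorial (a.2 : ℕ) : ℂ)⁻¹ •
      (β a (hP1 n) * evM (xpt a.1) (dM^[(a.2 : ℕ)] (P2 n)ᵀ)) := by
    rw [← h3a, hv, h3b]
  have goal3 : Hh n = H n + RowB β (P1 n) * M⁻¹ * (JetRow κ xpt (P2 n))ᵀ := by
    rw [← hGinv, h3c]
    congr 1
    refine Matrix.ext fun s t => ?_
    simp only [Matrix.mul_apply, Matrix.sum_apply, RowB, Matrix.of_apply,
      Matrix.transpose_apply, jetRow_apply, Matrix.smul_apply, smul_eq_mul, jet,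
      evM, dM_iter_apply]
    rw [Fintype.sum_prod_type]
    refine Finset.sum_congr rfl fun a _ => ?_
    rw [Finset.mul_sum]
    exact Finset.sum_congr rfl fun i _ => by ring
  -- Part 2 : expansion of hP2 n
  have h4 : ∀ k, n ≤ k → coeffM (hP2 n - P2 n) k = 0 := by
    intro k hk
    rcases eq_or_lt_of_le hk with h | h
    · rw [coeffM_sub, ← h, (hmon2h n).1, (hmon2 n).1, sub_self]
    · rw [coeffM_sub, (hmon2h n).2 k h, (hmon2 n).2 k h, sub_self]
  obtain ⟨D, hD⟩ := expand P2 hmon2 n _ h4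
  have hD' : hP2 n = P2 n + ∑ l ∈ Finset.range n, cm (D l) * P2 l := by
    rw [← hD]; abel
  have step8 : ∀ k, k < n → uh (P1 k) (hP2 n) = 0 := by
    intro k hk
    obtain ⟨F, hF⟩ := expand hP1 hmon1h (k + 1) (P1 k) (fun j hj => (hmon1 k).2 j hj)
    rw [hF, sesq_suml huh]
    refine Finset.sum_eq_zero fun j hj => ?_
    rw [hbioh j n, if_neg (by have := Finset.mem_range.mp hj; omega : ¬ (j = n)), mul_zero]
  have step9 : ∀ k, k < n → (D k)ᵀ
      = -((H k)⁻¹ * ∑ a : JIdx q κ, (Nat.factorial (a.2 : ℕ) : ℂ)⁻¹ •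
          (β a (P1 k) * evM (xpt a.1) (dM^[(a.2 : ℕ)] (hP2 n)ᵀ))) := by
    intro k hk
    have hukD : u (P1 k) (hP2 n) = H k * (D k)ᵀ := by
      conv_lhs => rw [hD']
      rw [sesq_addr hu, sesq_sumr hu, hbio k n, if_neg (by omega : ¬ (k = n))]
      have hterms : ∀ l ∈ Finset.range n, u (P1 k) (P2 l) * (D l)ᵀ
          = if l = k then H k * (D k)ᵀ else 0 := by
        intro l _
        by_cases h : l = k
        · subst h; simp [hbio l l]
        · rw [hbio k l, if_neg (fun hh => h hh.symm), Matrix.zero_mul, if_neg h]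
      rw [Finset.sum_congr rfl hterms, Finset.sum_ite_eq' (Finset.range n) k,
        if_pos (Finset.mem_range.mpr hk), zero_add]
    have h0 := step8 k hk
    rw [hv (P1 k) (hP2 n), hukD] at h0
    have hneg : H k * (D k)ᵀ
        = -(∑ a : JIdx q κ, (Nat.factorial (a.2 : ℕ) : ℂ)⁻¹ •
            (β a (P1 k) * evM (xpt a.1) (dM^[(a.2 : ℕ)] (hP2 n)ᵀ))) :=
      eq_neg_of_add_eq_zero_left h0
    calc (D k)ᵀ = (H k)⁻¹ * (H k * (D k)ᵀ) := by
          rw [← Matrix.mul_assoc, hHinv' k, Matrix.one_mul]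
    _ = _ := by rw [hneg, Matrix.mul_neg]
  -- jet matrices of hP2 n
  have hVt : ∀ (a : JIdx q κ) (l : ℕ),
      (Nat.factorial (a.2 : ℕ) : ℂ)⁻¹ • (β a (P1 l) * evM (xpt a.1) (dM^[(a.2 : ℕ)] (hP2 n)ᵀ))
        = β a (P1 l) *
          ((Nat.factorial (a.2 : ℕ) : ℂ)⁻¹ • evM (xpt a.1) (dM^[(a.2 : ℕ)] (hP2 n)))ᵀ := by
    intro a l
    rw [dM_iter_transpose, evM_transpose, Matrix.transpose_smul, mul_smul_comm]
  -- Step 10 : quasideterminantal identity for hP2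
  have hkey2 : (hP2 n)ᵀ = (P2 n)ᵀ - RowK β P1 P2 H n
      * ((JetRow κ xpt (hP2 n))ᵀ).map Polynomial.C := by
    have ht : (hP2 n)ᵀ = (P2 n)ᵀ + ∑ l ∈ Finset.range n, (P2 l)ᵀ * cm ((D l)ᵀ) := by
      conv_lhs => rw [hD']
      rw [Matrix.transpose_add, Matrix.transpose_sum]
      simp only [Matrix.transpose_mul, cm_transpose]
    rw [ht, sub_eq_add_neg]
    congr 1
    have hstep : ∑ l ∈ Finset.range n, (P2 l)ᵀ * cm ((D l)ᵀ)
        = -∑ l ∈ Finset.range n, (P2 l)ᵀ * cm ((H l)⁻¹ *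
            ∑ a : JIdx q κ, β a (P1 l) *
              ((Nat.factorial (a.2 : ℕ) : ℂ)⁻¹ • evM (xpt a.1) (dM^[(a.2 : ℕ)] (hP2 n)))ᵀ) := by
      rw [← Finset.sum_neg_distrib]
      refine Finset.sum_congr rfl fun l hl => ?_
      rw [step9 l (Finset.mem_range.mp hl),
        Finset.sum_congr rfl (fun a _ => hVt a l), cm_neg, Matrix.mul_neg]
    rw [hstep]
    congr 1
    -- reorganize into a sum over jet indices
    have hswap : ∑ l ∈ Finset.range n, (P2 l)ᵀ * cm ((H l)⁻¹ *
          ∑ a : JIdx q κ, β a (P1 l) *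
            ((Nat.factorial (a.2 : ℕ) : ℂ)⁻¹ • evM (xpt a.1) (dM^[(a.2 : ℕ)] (hP2 n)))ᵀ)
        = ∑ a : JIdx q κ,
            (∑ l ∈ Finset.range n, (P2 l)ᵀ * cm ((H l)⁻¹ * β a (P1 l)))
              * cm (((Nat.factorial (a.2 : ℕ) : ℂ)⁻¹ •
                  evM (xpt a.1) (dM^[(a.2 : ℕ)] (hP2 n)))ᵀ) := by
      simp only [Finset.mul_sum, Finset.sum_mul, cm_sum, cm_mul, Matrix.mul_assoc,
        ← Matrix.mul_assoc]
      try rw [Finset.sum_comm]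
    rw [hswap]
    refine Matrix.ext fun s t => ?_
    simp only [Matrix.mul_apply, Matrix.sum_apply, Matrix.map_apply, RowK, Matrix.of_apply,
      Matrix.transpose_apply, jetRow_apply, cm, Matrix.smul_apply, smul_eq_mul, jet,
      evM, dM_iter_apply]
    rw [Fintype.sum_prod_type]
  -- Step 11 : the jet of RowK is PairM
  have hKB : ∀ (a b : JIdx q κ), β a (KBlock P1 P2 H xpt n b)
      = ∑ k ∈ Finset.range n,
          ((Nat.factorial (b.2 : ℕ) : ℂ)⁻¹ • evM (xpt b.1) (dM^[(b.2 : ℕ)] (P2 k)))ᵀ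
            * (H k)⁻¹ * β a (P1 k) := by
    intro a b
    unfold KBlock
    rw [beta_sum hβ]
    exact Finset.sum_congr rfl fun k _ => beta_cm hβ a _ _
  have hjetRowK : ∀ (b : JIdx q κ) (j : Fin p) (x : JIdx q κ × Fin p),
      jet (b.2 : ℕ) (xpt b.1) (RowK β P1 P2 H n j x)
        = PairM β P1 P2 H xpt n (b, j) x := by
    intro b j x
    obtain ⟨a, i⟩ := x
    simp only [RowK, Matrix.of_apply, Matrix.sum_apply, Matrix.mul_apply,
      Matrix.transpose_apply, cm, Matrix.map_apply, jet_sum, jet_mul_C]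
    simp only [PairM, Matrix.of_apply, hKB a b, Matrix.sum_apply, Matrix.mul_apply,
      Matrix.transpose_apply, Matrix.smul_apply, smul_eq_mul, evM, dM_iter_apply, jet]
    refine Finset.sum_congr rfl fun k _ => ?_
    simp only [Finset.sum_mul, Finset.mul_sum]
    rw [Finset.sum_comm]
    refine Finset.sum_congr rfl fun r _ => Finset.sum_congr rfl fun w _ => by ring
  -- the linear system for the jets of hP2 n
  have hMJ : M * (JetRow κ xpt (hP2 n))ᵀ = (JetRow κ xpt (P2 n))ᵀ := by
    refine Matrix.ext fun bj t => ?_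
    obtain ⟨b, j⟩ := bj
    have h := congrArg (jet (b.2 : ℕ) (xpt b.1)) (congrFun (congrFun hkey2 j) t)
    rw [Matrix.sub_apply, jet_sub] at h
    simp only [Matrix.mul_apply, Matrix.map_apply, Matrix.transpose_apply, jet_sum,
      jet_mul_C, hjetRowK b j, jetRow_apply] at h
    rw [hMdef]
    simp only [Matrix.mul_apply, Matrix.add_apply, Matrix.one_apply, add_mul, ite_mul,
      one_mul, zero_mul, Finset.sum_add_distrib, Finset.sum_ite_eq, Finset.mem_univ,
      if_true, Matrix.transpose_apply, jetRow_apply]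
    rw [h, sub_add_cancel]
  have hJc : (JetRow κ xpt (hP2 n))ᵀ = M⁻¹ * (JetRow κ xpt (P2 n))ᵀ := by
    rw [← hMJ, ← Matrix.mul_assoc, hMM', Matrix.one_mul]
  refine ⟨goal1, ?_, goal3⟩
  rw [hkey2, hJc, Matrix.map_mul, ← Matrix.mul_assoc]
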